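/- Let Δ be a fundamental discriminant, c a positive integer, D = c²·Δ, and N a positive integer. Then there exists an integer B with B² ≡ D (mod 4N) if and only if for every prime p dividing N one of the following holds: (1) Δ is a nonzero square modulo p when p is odd (respectively Δ ≡ 1 (mod 8) when p = 2); (2) Δ is a non-square unit modulo p when p is odd (respectively Δ ≡ 5 (mod 8) when p = 2) and v_p(N) ≤ 2·v_p(c); (3) p divides Δ and v_p(N) ≤ 2·v_p(c) + 1. Here v_p denotes the p-adic valuation. -/

import Mathlib

/-- A fundamental discriminant: either `Δ ≡ 1 (mod 4)` and `Δ` squarefree, or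
`Δ = 4m` with `m` squarefree and `m ≡ 2` or `3 (mod 4)`. -/
def IsFundamentalDiscriminant (Δ : ℤ) : Prop :=
  (Δ % 4 = 1 ∧ Squarefree Δ) ∨
    (∃ m : ℤ, Δ = 4 * m ∧ Squarefree m ∧ (m % 4 = 2 ∨ m % 4 = 3))

lemma exists_sq_modEq_iff (n : ℕ) (D : ℤ) :
    (∃ B : ℤ, B ^ 2 ≡ D [ZMOD (n:ℤ)]) ↔ IsSquare (D : ZMod n) := by
  constructor
  · rintro ⟨B, hB⟩
    refine ⟨(B : ZMod n), ?_⟩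
    have := (ZMod.intCast_eq_intCast_iff (B^2) D n).2 hB
    push_cast at this
    rw [← this]; ring
  · rintro ⟨r, hr⟩
    obtain ⟨B, rfl⟩ := ZMod.intCast_surjective r
    refine ⟨B, (ZMod.intCast_eq_intCast_iff (B^2) D n).1 ?_⟩
    push_cast
    rw [hr]; ring

lemma isSquare_pi_iff {ι : Type*} {R : ι → Type*} [∀ i, Monoid (R i)] (x : ∀ i, R i) :
    IsSquare x ↔ ∀ i, IsSquare (x i) := by
  constructor
  · rintro ⟨r, hr⟩ i; exact ⟨r i, congrFun hr i⟩
  · intro h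
    choose r hr using h
    exact ⟨r, funext hr⟩

lemma isSquare_map_iff {R S : Type*} [Monoid R] [Monoid S] (e : R ≃* S) (x : R) :
    IsSquare (e x) ↔ IsSquare x := by
  constructor
  · intro h
    have := h.map e.symm.toMonoidHom
    simpa using this
  · intro h; exact h.map e.toMonoidHom

lemma isSquare_zmod_iff_forall (n : ℕ) (hn : n ≠ 0) (D : ℤ) :
    IsSquare (D : ZMod n) ↔ ∀ p ∈ n.primeFactors, IsSquare (D : ZMod (p ^ n.factorization p)) := by
  classical
  have hco : Pairwise (Function.onFun Nat.Coprime fun p : n.primeFactors => (p : ℕ) ^ n.factorization p) := by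
    intro i j hij
    have hi := Nat.prime_of_mem_primeFactors i.2
    have hj := Nat.prime_of_mem_primeFactors j.2
    have : (i : ℕ) ≠ j := fun h => hij (Subtype.ext h)
    exact Nat.Coprime.pow _ _ ((Nat.coprime_primes hi hj).2 this)
  have hprod : ∏ p : n.primeFactors, (p : ℕ) ^ n.factorization p = n := by
    rw [Finset.prod_coe_sort n.primeFactors (fun p => p ^ n.factorization p)]
    conv_rhs => rw [← Nat.factorization_prod_pow_eq_self hn]
    rfl
  have e := ZMod.prodEquivPi _ hco
  rw [hprod] at e
  rw [← isSquare_map_iff e.toMulEquiv (D : ZMod n)]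
  have he : e.toMulEquiv (D : ZMod n) = fun p : n.primeFactors => (D : ZMod ((p:ℕ) ^ n.factorization p)) := by
    funext p
    have h1 : e.toMulEquiv (D : ZMod n) = e (D : ZMod n) := rfl
    rw [h1, map_intCast e, Pi.intCast_apply]
  rw [he, isSquare_pi_iff]
  exact ⟨fun h p hp => h ⟨p, hp⟩, fun h p => h p p.2⟩

lemma exists_inv_mod {a n : ℤ} (h : IsCoprime a n) : ∃ b, a * b ≡ 1 [ZMOD n] := by
  obtain ⟨u, v, huv⟩ := h
  refine ⟨u, Int.ModEq.symm ?_⟩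
  rw [Int.modEq_iff_dvd]
  exact ⟨-v, by linarith [huv]⟩

lemma henselOdd {p : ℕ} (hp : p.Prime) (hp2 : p ≠ 2) {w : ℤ} (hw : ¬ (p:ℤ) ∣ w)
    (h : ∃ x : ℤ, x ^ 2 ≡ w [ZMOD (p:ℤ)]) (k : ℕ) :
    ∃ x : ℤ, x ^ 2 ≡ w [ZMOD (p:ℤ)^k] := by
  have hpI : Prime (p:ℤ) := Nat.prime_iff_prime_int.1 hp
  induction k with
  | zero => exact ⟨0, by simp [Int.modEq_iff_dvd]⟩
  | succ k ih =>
    rcases Nat.eq_zero_or_pos k with rfl | hk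
    · simpa using h
    obtain ⟨x, hx⟩ := ih
    have hdvd : (p:ℤ)^k ∣ w - x ^ 2 := Int.ModEq.dvd hx
    obtain ⟨s, hs⟩ := hdvd
    have hpx : ¬ (p:ℤ) ∣ x := by
      intro hdx
      apply hw
      have h1 : (p:ℤ) ∣ x ^ 2 := Dvd.dvd.mul_right hdx x |>.trans (by rw [sq])
      have h2 : (p:ℤ) ∣ w - x ^ 2 :=
        (dvd_pow_self (p:ℤ) hk.ne').trans ⟨s, hs⟩
      have := dvd_add h2 h1
      simpa using this
    have hco : IsCoprime (2 * x) ((p:ℤ)) := by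
      have h2 : ¬ (p:ℤ) ∣ 2 * x := by
        intro hd
        rcases hpI.dvd_mul.1 hd with h2 | h2
        · have : p ∣ 2 := Int.ofNat_dvd.mp (by exact_mod_cast h2)
          exact hp2 ((Nat.prime_dvd_prime_iff_eq hp Nat.prime_two).1 this)
        · exact hpx h2
      exact ((Prime.coprime_iff_not_dvd hpI).2 h2).symm
    obtain ⟨u, hu⟩ := exists_inv_mod hco
    refine ⟨x + (s * u) * (p:ℤ)^k, ?_⟩
    rw [Int.modEq_iff_dvd]
    have key : w - (x + (s*u) * (p:ℤ)^k)^2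
        = (s - 2*x*(s*u)) * (p:ℤ)^k - (s*u)^2 * ((p:ℤ)^k)^2 := by
      rw [show w = x^2 + (p:ℤ)^k * s by linarith [hs]]; ring
    rw [key]
    have h3 : (p:ℤ)^(k+1) ∣ (s - 2*x*(s*u)) * (p:ℤ)^k := by
      have : (p:ℤ) ∣ s - 2*x*(s*u) := by
        have h5 : (p:ℤ) ∣ 1 - 2 * x * u := Int.ModEq.dvd hu
        rcases h5 with ⟨t, ht⟩
        exact ⟨s * t, by rw [show s - 2*x*(s*u) = s * (1 - 2*x*u) by ring, ht]; ring⟩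
      rw [pow_succ, mul_comm ((p:ℤ)^k) (p:ℤ)]
      exact mul_dvd_mul this dvd_rfl
    have h4 : (p:ℤ)^(k+1) ∣ (s*u)^2 * ((p:ℤ)^k)^2 := by
      apply Dvd.dvd.mul_left
      rw [← pow_mul]
      exact pow_dvd_pow _ (by omega)
    exact dvd_sub h3 h4

lemma hensel2 {w : ℤ} (hw : w ≡ 1 [ZMOD 8]) (k : ℕ) :
    ∃ x : ℤ, x ^ 2 ≡ w [ZMOD 2^k] := by
  induction k with
  | zero => exact ⟨0, by simp [Int.modEq_iff_dvd]⟩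
  | succ k ih =>
    rcases le_or_gt (k+1) 3 with hk | hk
    · refine ⟨1, ?_⟩
      rw [Int.modEq_iff_dvd]
      have h8 : (8:ℤ) ∣ w - 1 := Int.ModEq.dvd (Int.ModEq.symm hw)
      have : (2:ℤ)^(k+1) ∣ 8 := by
        have : (2:ℤ)^(k+1) ∣ 2^3 := pow_dvd_pow 2 hk
        simpa using this
      simpa using this.trans h8
    obtain ⟨x, hx⟩ := ih
    have hk3 : 3 ≤ k := by omega
    have hdvd : (2:ℤ)^k ∣ w - x ^ 2 := Int.ModEq.dvd hx
    obtain ⟨s, hs⟩ := hdvd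
    have hxodd : ¬ (2:ℤ) ∣ x := by
      intro hdx
      have h1 : (2:ℤ) ∣ x ^ 2 := hdx.mul_right x |>.trans (by rw [sq])
      have h2 : (2:ℤ) ∣ w - x ^ 2 := (dvd_pow_self (2:ℤ) (by omega : k ≠ 0)).trans ⟨s, hs⟩
      have h3 : (2:ℤ) ∣ w := by simpa using dvd_add h2 h1
      have h4 : (2:ℤ) ∣ w - 1 := (by norm_num : (2:ℤ) ∣ 8).trans (Int.ModEq.dvd (Int.ModEq.symm hw))
      have : (2:ℤ) ∣ 1 := by simpa using dvd_sub h3 h4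
      norm_num at this
    refine ⟨x + s * 2^(k-1), ?_⟩
    rw [Int.modEq_iff_dvd]
    have hkk : k - 1 + (k-1) = 2*k - 2 := by omega
    have key : w - (x + s * 2^(k-1)) ^ 2
        = (s - x * s) * 2^k - s^2 * 2^(2*k-2) := by
      rw [show w = x^2 + 2^k * s by linarith [hs]]
      have e1 : (2:ℤ)^(2*k-2) = 2^(k-1) * 2^(k-1) := by rw [← pow_add, hkk]
      have e2 : (2:ℤ)^k = 2 * 2^(k-1) := by rw [← pow_succ']; congr 1; omega
      rw [e1, e2]; ring
    rw [key]
    have h3 : (2:ℤ)^(k+1) ∣ (s - x * s) * 2^k := by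
      have h5 : (2:ℤ) ∣ s - x * s := by
        have hodd : Odd x := Int.odd_iff.2 ((Int.emod_two_eq x).resolve_left (fun h => hxodd (Int.dvd_of_emod_eq_zero h)))
        obtain ⟨t, ht⟩ := hodd
        exact ⟨-t*s, by rw [ht]; ring⟩
      rw [pow_succ, mul_comm ((2:ℤ)^k) 2]
      exact mul_dvd_mul h5 dvd_rfl
    have h4 : (2:ℤ)^(k+1) ∣ s^2 * 2^(2*k-2) := by
      apply Dvd.dvd.mul_left
      exact pow_dvd_pow _ (by omega)
    exact dvd_sub h3 h4

lemma pow_dvd_of_sq_dvd {p : ℤ} (hp : Prime p) (v : ℕ) :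
    ∀ x : ℤ, p^(2*v) ∣ x^2 → p^v ∣ x := by
  induction v with
  | zero => intro x _; simp
  | succ v ih =>
    intro x h
    have h2 : p^2 ∣ x^2 := (pow_dvd_pow p (by omega)).trans h
    have hpx : p ∣ x := hp.dvd_of_dvd_pow (dvd_trans (dvd_pow_self p two_ne_zero) h2)
    obtain ⟨z, rfl⟩ := hpx
    have hz : p^(2*v) ∣ z^2 := by
      have hne : p^2 ≠ 0 := pow_ne_zero _ hp.ne_zero
      have : p^2 * p^(2*v) ∣ p^2 * z^2 := by
        rw [← pow_add]
        have e : 2 + 2*v = 2*(v+1) := by ring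
        rw [e]
        have : (p*z)^2 = p^2 * z^2 := by ring
        rw [← this]
        exact h
      exact (mul_dvd_mul_iff_left hne).1 this
    have := ih z hz
    rw [pow_succ, mul_comm (p^v) p]
    exact mul_dvd_mul dvd_rfl this

lemma cancel_sq {p : ℤ} (hp : Prime p) {v k : ℕ} (hk : 2*v ≤ k) {x w : ℤ}
    (h : x^2 ≡ p^(2*v) * w [ZMOD p^k]) : ∃ y : ℤ, y^2 ≡ w [ZMOD p^(k - 2*v)] := by
  have hd1 : p^(2*v) ∣ x^2 := by
    have h1 : p^k ∣ p^(2*v)*w - x^2 := Int.ModEq.dvd h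
    have h2 : p^(2*v) ∣ p^(2*v)*w - x^2 := ((pow_dvd_pow p hk).trans h1)
    have := dvd_sub (Dvd.intro w rfl) h2
    simpa using this
  obtain ⟨y, rfl⟩ := pow_dvd_of_sq_dvd hp v x hd1
  · refine ⟨y, ?_⟩
    rw [Int.modEq_iff_dvd] at h ⊢
    have hne : (p:ℤ)^(2*v) ≠ 0 := pow_ne_zero _ hp.ne_zero
    have h1 : p^(2*v) * p^(k-2*v) ∣ p^(2*v) * (w - y^2) := by
      rw [← pow_add, show 2*v + (k - 2*v) = k by omega]
      have e : p^(2*v)*w - (p^v*y)^2 = p^(2*v) * (w - y^2) := by ring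
      rw [← e]; exact h
    exact (mul_dvd_mul_iff_left hne).1 h1

lemma no_sq_odd_val {p : ℤ} (hp : Prime p) {v k : ℕ} (hk : 2*v + 2 ≤ k) {x w : ℤ}
    (hw : ¬ p ∣ w) (h : x^2 ≡ p^(2*v+1) * w [ZMOD p^k]) : False := by
  have h' : x^2 ≡ p^(2*v) * (p * w) [ZMOD p^k] := by
    rw [show p^(2*v) * (p*w) = p^(2*v+1)*w by ring]; exact h
  obtain ⟨y, hy⟩ := cancel_sq hp (by omega) h'
  have h2 : k - 2*v ≥ 2 := by omega
  have hdy : p ∣ y := by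
    apply hp.dvd_of_dvd_pow (n := 2)
    have h1 : p ∣ p * w - y^2 := (dvd_pow_self p (by omega : k - 2*v ≠ 0)).trans (Int.ModEq.dvd hy)
    have := dvd_sub (Dvd.intro w rfl) h1
    simpa [sq] using this
  have h3 : p^2 ∣ y^2 := by
    obtain ⟨z, rfl⟩ := hdy
    exact ⟨z^2, by ring⟩
  have h4 : p^2 ∣ p * w - y^2 := (pow_dvd_pow p h2).trans (Int.ModEq.dvd hy)
  have h5 : p^2 ∣ p * w := by simpa using dvd_add h4 h3
  have h6 : p ∣ w := by
    have hne : p ≠ 0 := hp.ne_zero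
    rcases h5 with ⟨t, ht⟩
    refine ⟨t, ?_⟩
    have : p * w = p * (p * t) := by rw [ht]; ring
    exact mul_left_cancel₀ hne this
  exact hw h6

lemma exists_ordCompl {p : ℕ} (hp : p.Prime) {c : ℤ} (hc : c ≠ 0) :
    ∃ c' : ℤ, c = (p:ℤ)^(padicValInt p c) * c' ∧ ¬ (p:ℤ) ∣ c' := by
  have hn : c.natAbs ≠ 0 := Int.natAbs_ne_zero.2 hc
  have hfac : p ^ (padicValNat p c.natAbs) * (c.natAbs / p ^ (padicValNat p c.natAbs)) = c.natAbs := by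
    have := Nat.ordProj_mul_ordCompl_eq_self c.natAbs p
    simpa [Nat.factorization_def _ hp] using this
  have hnd : ¬ p ∣ (c.natAbs / p ^ (padicValNat p c.natAbs)) := by
    have := Nat.not_dvd_ordCompl hp hn
    simpa [Nat.factorization_def _ hp] using this
  have hval : padicValInt p c = padicValNat p c.natAbs := rfl
  have habs : (c.natAbs : ℤ) = (p:ℤ)^(padicValNat p c.natAbs) * ((c.natAbs / p ^ (padicValNat p c.natAbs) : ℕ) : ℤ) := by
    exact_mod_cast hfac.symm
  rcases Int.natAbs_eq c with h | h
  · refine ⟨(c.natAbs / p ^ (padicValNat p c.natAbs) : ℕ), ?_, ?_⟩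
    · rw [hval, ← habs, ← h]
    · intro hd; exact hnd (Int.ofNat_dvd.1 (by exact_mod_cast hd))
  · refine ⟨-(c.natAbs / p ^ (padicValNat p c.natAbs) : ℕ), ?_, ?_⟩
    · rw [hval, mul_neg, ← habs, ← h]
    · intro hd
      have : (p:ℤ) ∣ ((c.natAbs / p ^ (padicValNat p c.natAbs) : ℕ) : ℤ) := (dvd_neg.1 hd)
      exact hnd (Int.ofNat_dvd.1 (by exact_mod_cast this))

lemma local_odd {p : ℕ} (hp : p.Prime) (hp2 : p ≠ 2) {Δ c : ℤ} (hc : c ≠ 0)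
    (hδ : (p:ℤ) ∣ Δ → ∃ δ : ℤ, Δ = p * δ ∧ ¬ (p:ℤ) ∣ δ) (k : ℕ) :
    (∃ B : ℤ, B^2 ≡ c^2*Δ [ZMOD (p:ℤ)^k]) ↔
      ((¬ (p : ℤ) ∣ Δ ∧ ∃ x : ℤ, x ^ 2 ≡ Δ [ZMOD (p : ℤ)]) ∨
       ((¬ (p : ℤ) ∣ Δ ∧ ¬ ∃ x : ℤ, x ^ 2 ≡ Δ [ZMOD (p : ℤ)]) ∧
         k ≤ 2 * padicValInt p c) ∨
       ((p : ℤ) ∣ Δ ∧ k ≤ 2 * padicValInt p c + 1)) := by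
  have hpI : Prime (p:ℤ) := Nat.prime_iff_prime_int.1 hp
  obtain ⟨c', hcc', hpc'⟩ := exists_ordCompl hp hc
  set v := padicValInt p c with hv
  by_cases hdvd : (p:ℤ) ∣ Δ
  · obtain ⟨δ, rfl, hpδ⟩ := hδ hdvd
    have hw : ¬ (p:ℤ) ∣ c'^2 * δ := by
      intro hd
      rcases hpI.dvd_mul.1 hd with h1 | h1
      · exact hpc' (hpI.dvd_of_dvd_pow h1)
      · exact hpδ h1
    have hDeq : c^2 * ((p:ℤ) * δ) = (p:ℤ)^(2*v+1) * (c'^2 * δ) := by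
      rw [hcc']; ring
    constructor
    · rintro ⟨B, hB⟩
      refine Or.inr (Or.inr ⟨hdvd, ?_⟩)
      by_contra hlt
      push_neg at hlt
      exact no_sq_odd_val hpI (by omega) hw (hDeq ▸ hB)
    · rintro (⟨h1, _⟩ | ⟨⟨h1, _⟩, _⟩ | ⟨_, hk⟩)
      · exact absurd hdvd h1
      · exact absurd hdvd h1
      · refine ⟨0, ?_⟩
        have hdd : ((p:ℤ)^k) ∣ c^2*((p:ℤ)*δ) := by
          rw [hDeq]; exact (pow_dvd_pow _ (by omega)).mul_right _
        rw [Int.modEq_iff_dvd]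
        simpa using hdd
  · by_cases hQR : ∃ x : ℤ, x ^ 2 ≡ Δ [ZMOD (p:ℤ)]
    · constructor
      · intro _; exact Or.inl ⟨hdvd, hQR⟩
      · intro _
        obtain ⟨x, hx⟩ := henselOdd hp hp2 hdvd hQR k
        exact ⟨c * x, by have := Int.ModEq.mul_left (c^2) hx; rw [show (c*x)^2 = c^2 * x^2 by ring]; exact this⟩
    · have hw : ¬ (p:ℤ) ∣ c'^2 * Δ := by
        intro hd
        rcases hpI.dvd_mul.1 hd with h1 | h1
        · exact hpc' (hpI.dvd_of_dvd_pow h1)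
        · exact hdvd h1
      have hDeq : c^2 * Δ = (p:ℤ)^(2*v) * (c'^2 * Δ) := by rw [hcc']; ring
      constructor
      · rintro ⟨B, hB⟩
        refine Or.inr (Or.inl ⟨⟨hdvd, hQR⟩, ?_⟩)
        by_contra hlt
        push_neg at hlt
        obtain ⟨y, hy⟩ := cancel_sq hpI (by omega) (hDeq ▸ hB)
        have hy1 : y^2 ≡ c'^2 * Δ [ZMOD (p:ℤ)] := by
          refine Int.ModEq.of_dvd ?_ hy
          exact dvd_pow_self _ (by omega : k - 2*v ≠ 0)
        obtain ⟨d, hd⟩ := exists_inv_mod ((hpI.coprime_iff_not_dvd.2 hpc').symm)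
        apply hQR
        refine ⟨y * d, ?_⟩
        calc (y*d)^2 = y^2 * d^2 := by ring
        _ ≡ (c'^2 * Δ) * d^2 [ZMOD (p:ℤ)] := Int.ModEq.mul_right _ hy1
        _ = (c'*d)^2 * Δ := by ring
        _ ≡ 1^2 * Δ [ZMOD (p:ℤ)] := Int.ModEq.mul_right _ (Int.ModEq.pow 2 hd)
        _ = Δ := by ring
      · rintro (⟨_, hQ⟩ | ⟨_, hk⟩ | ⟨h1, _⟩)
        · exact absurd hQ hQR
        · refine ⟨0, ?_⟩
          rw [Int.modEq_iff_dvd, hDeq]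
          simpa using ((pow_dvd_pow ((p:ℤ)) hk).mul_right (c'^2*Δ))
        · exact absurd h1 hdvd

lemma odd_sq_mod8 {x : ℤ} (hx : ¬ (2:ℤ) ∣ x) : (8:ℤ) ∣ x^2 - 1 := by
  obtain ⟨t, rfl⟩ := Int.odd_iff.2 ((Int.emod_two_eq x).resolve_left (fun h => hx (Int.dvd_of_emod_eq_zero h)))
  obtain ⟨u, hu⟩ := Int.even_mul_succ_self t
  exact ⟨u, by linear_combination 4 * hu⟩

lemma local_two {Δ c : ℤ} (hc : c ≠ 0) (hΔ : IsFundamentalDiscriminant Δ) (k : ℕ) :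
    (∃ B : ℤ, B^2 ≡ c^2*Δ [ZMOD (2:ℤ)^(k+2)]) ↔
      (Δ ≡ 1 [ZMOD 8] ∨ (Δ ≡ 5 [ZMOD 8] ∧ k ≤ 2 * padicValInt 2 c) ∨
        ((2:ℤ) ∣ Δ ∧ k ≤ 2 * padicValInt 2 c + 1)) := by
  have hpI : Prime (2:ℤ) := Int.prime_two
  obtain ⟨c', hcc', hpc'⟩ := exists_ordCompl Nat.prime_two hc
  push_cast at hcc'
  set v := padicValInt 2 c with hv
  have hc'sq : (8:ℤ) ∣ c'^2 - 1 := odd_sq_mod8 hpc'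
  rcases hΔ with ⟨hΔ4, hsf⟩ | ⟨m, rfl, hmsf, hm4⟩
  · -- Δ odd
    have hΔodd : ¬ (2:ℤ) ∣ Δ := by omega
    have h8 : Δ % 8 = 1 ∨ Δ % 8 = 5 := by omega
    rcases h8 with h8 | h8
    · -- Δ ≡ 1 mod 8
      have hmod : Δ ≡ 1 [ZMOD 8] := by unfold Int.ModEq; omega
      constructor
      · intro _; exact Or.inl hmod
      · intro _
        obtain ⟨x, hx⟩ := hensel2 hmod (k+2)
        exact ⟨c * x, by have := Int.ModEq.mul_left (c^2) hx; rw [show (c*x)^2 = c^2 * x^2 by ring]; exact this⟩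
    · -- Δ ≡ 5 mod 8
      have hn1 : ¬ (Δ ≡ 1 [ZMOD 8]) := by unfold Int.ModEq; omega
      have h5 : Δ ≡ 5 [ZMOD 8] := by unfold Int.ModEq; omega
      have hDeq : c^2 * Δ = (2:ℤ)^(2*v) * (c'^2 * Δ) := by rw [hcc']; ring
      have hw5 : (8:ℤ) ∣ c'^2 * Δ - 5 := by
        obtain ⟨a, ha⟩ := hc'sq
        have : Δ % 8 = 5 := h8
        obtain ⟨b, hb⟩ : (8:ℤ) ∣ Δ - 5 := by omega
        exact ⟨a * Δ + b, by linear_combination Δ * ha + hb⟩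
      constructor
      · rintro ⟨B, hB⟩
        refine Or.inr (Or.inl ⟨h5, ?_⟩)
        by_contra hlt
        push_neg at hlt
        obtain ⟨y, hy⟩ := cancel_sq hpI (by omega) (hDeq ▸ hB)
        have hy8 : (8:ℤ) ∣ c'^2 * Δ - y^2 := by
          have := Int.ModEq.dvd hy
          refine dvd_trans ?_ this
          have : ((2:ℤ)^3) ∣ 2^(k+2-2*v) := pow_dvd_pow _ (by omega)
          simpa using this
        have hyodd : ¬ (2:ℤ) ∣ y := by
          rintro ⟨z, rfl⟩
          obtain ⟨t, ht⟩ := hy8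
          obtain ⟨b, hb⟩ := hw5
          have ht' : c'^2*Δ - 4*z^2 = 8*t := by linear_combination ht
          generalize hX : c'^2*Δ = X at ht' hb
          generalize hu : z^2 = u at ht'
          omega
        have := odd_sq_mod8 hyodd
        obtain ⟨a1, ha1⟩ := this
        obtain ⟨a2, ha2⟩ := hy8
        obtain ⟨a3, ha3⟩ := hw5
        omega
      · rintro (h1 | ⟨_, hk⟩ | ⟨h1, _⟩)
        · exact absurd h1 hn1
        · refine ⟨2^v, ?_⟩
          rw [Int.modEq_iff_dvd, hDeq]
          obtain ⟨b, hb⟩ : (4:ℤ) ∣ c'^2*Δ - 1 := by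
            obtain ⟨a, ha⟩ := hw5; exact ⟨2*a + 1, by linarith⟩
          refine Dvd.dvd.trans (pow_dvd_pow (2:ℤ) (show k+2 ≤ 2*v+2 by omega)) ⟨b, ?_⟩
          have e1 : ((2:ℤ)^v)^2 = 2^(2*v) := by ring
          have e2 : (2:ℤ)^(2*v+2) = 2^(2*v) * 4 := by rw [pow_add]; norm_num
          rw [e1, e2]
          linear_combination (2:ℤ)^(2*v) * hb
        · exact absurd h1 hΔodd
  · -- Δ = 4m
    have hΔeven : (2:ℤ) ∣ 4 * m := ⟨2*m, by ring⟩
    have hn1 : ¬ (4*m ≡ 1 [ZMOD 8]) := by unfold Int.ModEq; omega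
    have hn5 : ¬ (4*m ≡ 5 [ZMOD 8]) := by unfold Int.ModEq; omega
    rcases hm4 with hm4 | hm4
    · -- m ≡ 2 mod 4
      obtain ⟨μ, hμ⟩ : ∃ μ, m = 2 * μ ∧ ¬ (2:ℤ) ∣ μ := ⟨m / 2, by omega, by omega⟩
      obtain ⟨hμ1, hμ2⟩ := hμ
      have hw : ¬ (2:ℤ) ∣ c'^2 * μ := by
        intro hd
        rcases hpI.dvd_mul.1 hd with h1 | h1
        · exact hpc' (hpI.dvd_of_dvd_pow h1)
        · exact hμ2 h1
      have hDeq : c^2 * (4*m) = (2:ℤ)^(2*(v+1)+1) * (c'^2 * μ) := by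
        rw [hcc', hμ1]; ring
      constructor
      · rintro ⟨B, hB⟩
        refine Or.inr (Or.inr ⟨hΔeven, ?_⟩)
        by_contra hlt
        push_neg at hlt
        exact no_sq_odd_val hpI (show 2*(v+1)+2 ≤ k+2 by omega) hw (hDeq ▸ hB)
      · rintro (h1 | ⟨h1, _⟩ | ⟨_, hk⟩)
        · exact absurd h1 hn1
        · exact absurd h1 hn5
        · refine ⟨0, ?_⟩
          rw [Int.modEq_iff_dvd, hDeq]
          simpa using ((pow_dvd_pow (2:ℤ) (show k+2 ≤ 2*(v+1)+1 by omega)).mul_right (c'^2*μ))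
    · -- m ≡ 3 mod 4
      have hDeq : c^2 * (4*m) = (2:ℤ)^(2*v+2) * (c'^2 * m) := by rw [hcc']; ring
      have hw3 : (4:ℤ) ∣ c'^2 * m - 3 := by
        obtain ⟨a, ha⟩ := hc'sq
        obtain ⟨b, hb⟩ : (4:ℤ) ∣ m - 3 := by omega
        exact ⟨2 * a * m + b, by linear_combination m * ha + hb⟩
      constructor
      · rintro ⟨B, hB⟩
        refine Or.inr (Or.inr ⟨hΔeven, ?_⟩)
        by_contra hlt
        push_neg at hlt
        have hB' : B^2 ≡ (2:ℤ)^(2*(v+1)) * (c'^2 * m) [ZMOD (2:ℤ)^(k+2)] := by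
          rw [show (2:ℤ)^(2*(v+1)) * (c'^2*m) = 2^(2*v+2) * (c'^2*m) by ring_nf]
          exact hDeq ▸ hB
        obtain ⟨y, hy⟩ := cancel_sq hpI (show 2*(v+1) ≤ k+2 by omega) hB'
        have hy4 : (4:ℤ) ∣ c'^2 * m - y^2 := by
          have := Int.ModEq.dvd hy
          refine dvd_trans ?_ this
          have h22 : ((2:ℤ)^2) ∣ 2^(k+2-2*(v+1)) := pow_dvd_pow _ (by omega)
          simpa using h22
        have hyodd : ¬ (2:ℤ) ∣ y := by
          rintro ⟨z, rfl⟩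
          obtain ⟨t, ht⟩ := hy4
          obtain ⟨b, hb⟩ := hw3
          have ht' : c'^2*m - 4*z^2 = 4*t := by linear_combination ht
          generalize hX : c'^2*m = X at ht' hb
          generalize hu : z^2 = u at ht'
          omega
        have := odd_sq_mod8 hyodd
        obtain ⟨a1, ha1⟩ := this
        obtain ⟨a2, ha2⟩ := hy4
        obtain ⟨a3, ha3⟩ := hw3
        omega
      · rintro (h1 | ⟨h1, _⟩ | ⟨_, hk⟩)
        · exact absurd h1 hn1
        · exact absurd h1 hn5
        · refine ⟨2^(v+1), ?_⟩
          rw [Int.modEq_iff_dvd, hDeq]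
          obtain ⟨b, hb⟩ : (2:ℤ) ∣ c'^2*m - 1 := by
            obtain ⟨a, ha⟩ := hw3; exact ⟨2*a + 1, by linarith⟩
          refine Dvd.dvd.trans (pow_dvd_pow (2:ℤ) (show k+2 ≤ 2*v+3 by omega)) ⟨b, ?_⟩
          have e1 : ((2:ℤ)^(v+1))^2 = 2^(2*v+2) := by ring
          have e2 : (2:ℤ)^(2*v+3) = 2^(2*v+2) * 2 := by rw [pow_succ]
          rw [e1, e2]
          linear_combination (2:ℤ)^(2*v+2) * hb

lemma fund_trichotomy {Δ : ℤ} (h : IsFundamentalDiscriminant Δ) :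
    Δ ≡ 1 [ZMOD 8] ∨ Δ ≡ 5 [ZMOD 8] ∨ (2:ℤ) ∣ Δ := by
  rcases h with ⟨h4, _⟩ | ⟨m, rfl, _, _⟩
  · unfold Int.ModEq
    rcases (by omega : Δ % 8 = 1 ∨ Δ % 8 = 5) with h | h
    · exact Or.inl (by omega)
    · exact Or.inr (Or.inl (by omega))
  · exact Or.inr (Or.inr ⟨2*m, by ring⟩)

lemma fund_odd_prime_dvd {Δ : ℤ} (h : IsFundamentalDiscriminant Δ) {p : ℕ} (hp : p.Prime)
    (hp2 : p ≠ 2) (hdvd : (p:ℤ) ∣ Δ) : ∃ δ : ℤ, Δ = p * δ ∧ ¬ (p:ℤ) ∣ δ := by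
  have hpI : Prime (p:ℤ) := Nat.prime_iff_prime_int.1 hp
  have hp4 : ¬ (p:ℤ) ∣ 4 := by
    intro hd
    have hd2 : (p:ℤ) ∣ 2^2 := by norm_num; exact hd
    have : (p:ℤ) ∣ 2 := hpI.dvd_of_dvd_pow hd2
    have h22 : p ∣ (2:ℤ).natAbs := Int.natCast_dvd.1 this
    norm_num at h22
    exact hp2 ((Nat.prime_dvd_prime_iff_eq hp Nat.prime_two).1 h22)
  rcases h with ⟨h4, hsf⟩ | ⟨m, rfl, hmsf, hm4⟩
  · obtain ⟨δ, rfl⟩ := hdvd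
    refine ⟨δ, rfl, ?_⟩
    rintro ⟨e, rfl⟩
    exact hpI.not_unit (hsf (p:ℤ) ⟨e, by ring⟩)
  · have hpm : (p:ℤ) ∣ m := by
      rcases hpI.dvd_mul.1 hdvd with h1 | h1
      · exact absurd h1 hp4
      · exact h1
    obtain ⟨μ, rfl⟩ := hpm
    refine ⟨4 * μ, by ring, ?_⟩
    intro hd
    rcases hpI.dvd_mul.1 hd with h1 | h1
    · exact hp4 h1
    · obtain ⟨e, rfl⟩ := h1
      exact hpI.not_unit (hmsf (p:ℤ) ⟨e, by ring⟩)


/-- `D = c²·Δ` admits a square root modulo `4N` if and only if for each prime `p`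
dividing `N` one of the three conditions of Lemma 2.1 holds. -/
theorem squareRoot_mod_4N_iff
    (Δ : ℤ) (hΔ : IsFundamentalDiscriminant Δ)
    (c N D : ℤ) (hc : 0 < c) (hN : 0 < N) (hD : D = c ^ 2 * Δ) :
    (∃ B : ℤ, B ^ 2 ≡ D [ZMOD 4 * N]) ↔
      ∀ p : ℕ, p.Prime → (p : ℤ) ∣ N →
        ((p ≠ 2 →
          ((¬ (p : ℤ) ∣ Δ ∧ ∃ x : ℤ, x ^ 2 ≡ Δ [ZMOD (p : ℤ)]) ∨
           ((¬ (p : ℤ) ∣ Δ ∧ ¬ ∃ x : ℤ, x ^ 2 ≡ Δ [ZMOD (p : ℤ)]) ∧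
             padicValInt p N ≤ 2 * padicValInt p c) ∨
           ((p : ℤ) ∣ Δ ∧ padicValInt p N ≤ 2 * padicValInt p c + 1))) ∧
         (p = 2 →
          (Δ ≡ 1 [ZMOD 8] ∨
           (Δ ≡ 5 [ZMOD 8] ∧ padicValInt 2 N ≤ 2 * padicValInt 2 c) ∨
           ((2 : ℤ) ∣ Δ ∧ padicValInt 2 N ≤ 2 * padicValInt 2 c + 1)))) := by
  subst hD
  set M := (4*N).natAbs with hMdef
  have hNa : N.natAbs ≠ 0 := Int.natAbs_ne_zero.2 hN.ne'
  have hM : M = 4 * N.natAbs := by rw [hMdef, Int.natAbs_mul]; norm_num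
  have hMne : M ≠ 0 := by simp [hM, hNa]
  have hcast : ((M : ℕ) : ℤ) = 4*N := Int.natAbs_of_nonneg (by positivity)
  have hfacsum : M.factorization = (4:ℕ).factorization + N.natAbs.factorization := by
    rw [hM]; exact Nat.factorization_mul (by norm_num) hNa
  have h4fac : (4:ℕ).factorization = Finsupp.single 2 2 := by
    have : (4:ℕ) = 2^2 := by norm_num
    rw [this, Nat.Prime.factorization_pow Nat.prime_two]
  have hfac : ∀ p : ℕ, p.Prime → p ≠ 2 → M.factorization p = padicValInt p N := by
    intro p hp hp2
    rw [hfacsum, Finsupp.add_apply, h4fac, Finsupp.single_apply,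
      if_neg (fun h => hp2 h.symm), Nat.factorization_def _ hp]
    simp [padicValInt]
  have hfac2 : M.factorization 2 = padicValInt 2 N + 2 := by
    rw [hfacsum, Finsupp.add_apply, h4fac, Finsupp.single_apply, if_pos rfl,
      Nat.factorization_def _ Nat.prime_two]
    simp [padicValInt]; ring
  have main1 : (∃ B : ℤ, B ^ 2 ≡ c^2*Δ [ZMOD 4 * N]) ↔
      ∀ p ∈ M.primeFactors, IsSquare ((c^2*Δ : ℤ) : ZMod (p ^ M.factorization p)) := by
    rw [← isSquare_zmod_iff_forall M hMne, ← exists_sq_modEq_iff, hcast]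
  rw [main1]
  have convl : ∀ p e : ℕ, IsSquare ((c^2*Δ : ℤ) : ZMod (p ^ e)) ↔
      (∃ B : ℤ, B ^ 2 ≡ c^2*Δ [ZMOD (p:ℤ) ^ e]) := by
    intro p e
    rw [← exists_sq_modEq_iff]
    constructor <;> (rintro ⟨B, hB⟩; exact ⟨B, by push_cast at hB ⊢; exact hB⟩)
  constructor
  · intro h p hp hpN
    constructor
    · intro hp2
      have hpM : p ∈ M.primeFactors := by
        refine Nat.mem_primeFactors.2 ⟨hp, ?_, hMne⟩
        rw [hM]
        exact Dvd.dvd.mul_left (Int.natCast_dvd.1 hpN) 4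
      have hQ := (convl p _).1 (h p hpM)
      rw [hfac p hp hp2] at hQ
      exact (local_odd hp hp2 hc.ne' (fund_odd_prime_dvd hΔ hp hp2) (padicValInt p N)).1 hQ
    · rintro rfl
      have hpM : (2:ℕ) ∈ M.primeFactors := by
        refine Nat.mem_primeFactors.2 ⟨Nat.prime_two, ?_, hMne⟩
        rw [hM]; exact ⟨2 * N.natAbs, by ring⟩
      have hQ := (convl 2 _).1 (h 2 hpM)
      rw [hfac2] at hQ
      exact (local_two hc.ne' hΔ (padicValInt 2 N)).1 hQ
  · intro h p hpM
    obtain ⟨hp, hpdvd, -⟩ := Nat.mem_primeFactors.1 hpM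
    rw [convl p _]
    by_cases hp2 : p = 2
    · subst hp2
      rw [hfac2]
      apply (local_two hc.ne' hΔ (padicValInt 2 N)).2
      by_cases h2N : (2:ℤ) ∣ N
      · exact (h 2 Nat.prime_two h2N).2 rfl
      · have hval0 : padicValInt 2 N = 0 := by
          apply padicValNat.eq_zero_of_not_dvd
          intro hh
          exact h2N (Int.natCast_dvd.2 hh)
        rcases fund_trichotomy hΔ with h1 | h1 | h1
        · exact Or.inl h1
        · exact Or.inr (Or.inl ⟨h1, by omega⟩)
        · exact Or.inr (Or.inr ⟨h1, by omega⟩)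
    · have hpN : (p:ℤ) ∣ N := by
        rw [hM] at hpdvd
        rcases (Nat.Prime.dvd_mul hp).1 hpdvd with h1 | h1
        · exfalso
          have : p ∣ 2^2 := by norm_num; exact h1
          exact hp2 ((Nat.prime_dvd_prime_iff_eq hp Nat.prime_two).1 (hp.dvd_of_dvd_pow this))
        · exact Int.natCast_dvd.2 h1
      rw [hfac p hp hp2]
      exact (local_odd hp hp2 hc.ne' (fund_odd_prime_dvd hΔ hp hp2) (padicValInt p N)).2
        ((h p hp hpN).1 hp2)
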